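/- For p ∈ (0,1), let BS(p) denote the standardized Bernoulli random variable taking value √(q/p) with probability p and -√(p/q) with probability q = 1-p. Then for every fixed t ∈ ℝ, the function p ↦ E (BS(p) - t)₊² is nonincreasing on (0,1). -/

import Mathlib

open Real

private lemma max_sq_le (x : ℝ) : (max x 0)^2 ≤ x^2 := by
  rcases le_total x 0 with h | h
  · simp [max_eq_right h]
    positivity
  · rw [max_eq_left h]

private lemma G_mono (t s₁ s₂ : ℝ) (h1 : 0 < s₁) (h12 : s₁ ≤ s₂) :
    (1 + s₂^2) * ((max (s₁ - t) 0)^2 + (max (-1 - t*s₁) 0)^2)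
      ≤ (1 + s₁^2) * ((max (s₂ - t) 0)^2 + (max (-1 - t*s₂) 0)^2) := by
  have h2 : 0 < s₂ := lt_of_lt_of_le h1 h12
  rcases le_or_gt (-1 - t*s₁) 0 with hA | hA
  · rw [max_eq_right hA]
    rcases le_or_gt (-1 - t*s₂) 0 with hB | hB
    · rw [max_eq_right hB]
      rcases le_or_gt (s₁ - t) 0 with hC | hC
      · rw [max_eq_right hC]
        have h0 : (1 + s₂^2) * ((0:ℝ)^2 + 0^2) = 0 := by ring
        rw [h0]
        positivity
      · rw [max_eq_left hC.le, max_eq_left (by linarith : (0:ℝ) ≤ s₂ - t)]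
        have key : (1 + s₁^2)*(s₂ - t)^2 - (1 + s₂^2)*(s₁ - t)^2
            = (s₂ - s₁)*((1 + t*s₁)*(s₂ - t) + (1 + t*s₂)*(s₁ - t)) := by ring
        nlinarith [mul_nonneg (sub_nonneg.2 h12)
          (add_nonneg (mul_nonneg (by linarith : (0:ℝ) ≤ 1 + t*s₁) (by linarith : (0:ℝ) ≤ s₂ - t))
            (mul_nonneg (by linarith : (0:ℝ) ≤ 1 + t*s₂) (by linarith : (0:ℝ) ≤ s₁ - t)))]
    · -- -1 - t*s₂ > 0, so t < 0, s₂ - t > 0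
      have ht : t < 0 := by nlinarith
      rw [max_eq_left hB.le, max_eq_left (by nlinarith : (0:ℝ) ≤ s₂ - t)]
      have hm := max_sq_le (s₁ - t)
      nlinarith [sq_nonneg (1 + t*s₁), sq_nonneg s₁, sq_nonneg s₂, sq_nonneg t,
        mul_nonneg (sq_nonneg s₁) (sq_nonneg (1 + t*s₂)),
        mul_nonneg (add_nonneg (sq_nonneg s₁) zero_le_one) (sq_nonneg (1+t*s₁))]
  · -- -1 - t*s₁ > 0, so t*s₁ < -1, t < 0, hence t*s₂ ≤ t*s₁ < -1
    have ht : t < 0 := by nlinarith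
    have hB : (0:ℝ) < -1 - t*s₂ := by nlinarith [mul_le_mul_of_nonpos_left h12 ht.le]
    rw [max_eq_left hA.le, max_eq_left hB.le,
      max_eq_left (by nlinarith : (0:ℝ) ≤ s₁ - t), max_eq_left (by nlinarith : (0:ℝ) ≤ s₂ - t)]
    nlinarith [sq_nonneg (s₁ - s₂)]

/-- For each fixed `t`, the map `p ↦ E (BS(p) - t)₊²` is nonincreasing on `(0,1)`,
where `BS(p)` takes value `√((1-p)/p)` with probability `p` and `-√(p/(1-p))`
with probability `1-p`. -/
theorem bernoulli_moment_antitone (t : ℝ) :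
    AntitoneOn
      (fun p : ℝ =>
        p * (max (Real.sqrt ((1 - p) / p) - t) 0) ^ 2
          + (1 - p) * (max (-Real.sqrt (p / (1 - p)) - t) 0) ^ 2)
      (Set.Ioo 0 1) := by
  -- first rewrite the function in terms of s = √((1-p)/p)
  have key : ∀ p : ℝ, 0 < p → p < 1 →
      p * (max (Real.sqrt ((1 - p) / p) - t) 0) ^ 2
        + (1 - p) * (max (-Real.sqrt (p / (1 - p)) - t) 0) ^ 2
      = ((max (Real.sqrt ((1 - p) / p) - t) 0)^2
          + (max (-1 - t * Real.sqrt ((1 - p) / p)) 0)^2)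
        / (1 + (Real.sqrt ((1 - p) / p))^2) := by
    intro p hp0 hp1
    set s := Real.sqrt ((1 - p) / p) with hs
    have hq0 : 0 < 1 - p := by linarith
    have hspos : 0 < s := Real.sqrt_pos.2 (div_pos hq0 hp0)
    have hs2 : s^2 = (1 - p) / p := Real.sq_sqrt (le_of_lt (div_pos hq0 hp0))
    have hps : p * (1 + s^2) = 1 := by
      rw [hs2]; field_simp; ring
    have hinv : Real.sqrt (p / (1 - p)) = 1 / s := by
      rw [show p / (1 - p) = ((1 - p) / p)⁻¹ by field_simp, Real.sqrt_inv, one_div]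
    have hsecond : max (-Real.sqrt (p / (1 - p)) - t) 0 = (1/s) * max (-1 - t*s) 0 := by
      rw [hinv, show (1:ℝ)/s * max (-1 - t*s) 0 = max ((1/s) * (-1 - t*s)) ((1/s) * 0) from
        (mul_max_of_nonneg (-1 - t*s) 0 (le_of_lt (by positivity : (0:ℝ) < 1/s)))]
      congr 1
      · field_simp
      · ring
    have hs0 : s ≠ 0 := ne_of_gt hspos
    rw [hsecond, show (1 - p) = p * s^2 from by rw [hs2]; field_simp,
        eq_div_iff (by positivity : (0:ℝ) < 1 + s^2).ne']
    have hM : s^2 * (1/s * max (-1 - t*s) 0)^2 = (max (-1 - t*s) 0)^2 := by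
      rw [mul_pow, ← mul_assoc, one_div, inv_pow, mul_inv_cancel₀ (pow_ne_zero 2 hs0), one_mul]
    linear_combination ((max (s - t) 0)^2 + (max (-1 - t*s) 0)^2) * hps + p * (1 + s^2) * hM
  intro p₁ hp₁ p₂ hp₂ hle
  simp only
  rw [key p₁ hp₁.1 hp₁.2, key p₂ hp₂.1 hp₂.2]
  set s₁ := Real.sqrt ((1 - p₁) / p₁) with hs1
  set s₂ := Real.sqrt ((1 - p₂) / p₂) with hs2
  have hq₁ : 0 < 1 - p₁ := by linarith [hp₁.2]
  have hq₂ : 0 < 1 - p₂ := by linarith [hp₂.2]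
  have hs₂pos : 0 < s₂ := Real.sqrt_pos.2 (div_pos hq₂ hp₂.1)
  have hord : s₂ ≤ s₁ := by
    apply Real.sqrt_le_sqrt
    apply div_le_div₀ (le_of_lt hq₁) (by linarith) hp₁.1 hle
  have := G_mono t s₂ s₁ hs₂pos hord
  rw [div_le_div_iff₀ (by positivity) (by positivity)]
  linarith
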